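/- Let μ = (μ₁, μ₂, μ₃) ∈ ℝ³, let M(v) = (μ₁v₁, μ₂v₂, μ₃v₃), set ρ₁ = 2μ₂μ₃, ρ₂ = 2μ₁μ₃, ρ₃ = 2μ₁μ₂, and let σ ∈ ℝ³ with |σ| = 1 satisfy M(M(σ)) = |M(σ)|²·σ. Set ε₁ = μ₁² + μ₂² + μ₃² − |M(σ)|² and ε₂ = (1/4)(ρ₁²σ₁² + ρ₂²σ₂² + ρ₃²σ₃²), and define ν₂ : ℝ³ → ℝ³ by ν₂(v) = M⁴(v) − ε₁·M(M(v)) + ε₂·v + (ε₁ − |M(σ)|²)·⟨v, M(σ)⟩·M(σ). Then Σ_{i=1}^{3} μ_i · (e_i × ν₂(e_i)) = (ε₁ − |M(σ)|²) · ( M(M(σ)) × M(σ) ). -/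

import Mathlib

open Matrix

/-- The Milnor map: `M(v) = (μ₁v₁, μ₂v₂, μ₃v₃)`. -/
def milnorMap (μ v : Fin 3 → ℝ) : Fin 3 → ℝ := fun i => μ i * v i

/-- For a harmonic unit vector field `σ` (i.e. `M²σ = |Mσ|²σ`), the divergence of the second
vertical Newton tensor `ν₂(v) = M⁴v − ε₁M²v + ε₂v + (ε₁ − |Mσ|²)⟨v, Mσ⟩Mσ` satisfies
`Σᵢ μᵢ(eᵢ × ν₂(eᵢ)) = (ε₁ − |Mσ|²)·(M²σ × Mσ)`, i.e. `div ν₂ = (ε₁ − |Mσ|²)·div ν₁`. -/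
theorem div_newton_two (μ σ : Fin 3 → ℝ) (hσ : σ ⬝ᵥ σ = 1)
    (hharm : milnorMap μ (milnorMap μ σ) = (milnorMap μ σ ⬝ᵥ milnorMap μ σ) • σ)
    (ρ : Fin 3 → ℝ) (hρ : ρ = ![2 * μ 1 * μ 2, 2 * μ 0 * μ 2, 2 * μ 0 * μ 1])
    (ε₁ ε₂ : ℝ)
    (hε₁ : ε₁ = μ 0 ^ 2 + μ 1 ^ 2 + μ 2 ^ 2 - milnorMap μ σ ⬝ᵥ milnorMap μ σ)
    (hε₂ : ε₂ = (1 / 4 : ℝ) *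
        (ρ 0 ^ 2 * σ 0 ^ 2 + ρ 1 ^ 2 * σ 1 ^ 2 + ρ 2 ^ 2 * σ 2 ^ 2))
    (ν₂ : (Fin 3 → ℝ) → (Fin 3 → ℝ))
    (hν₂ : ∀ v, ν₂ v =
      milnorMap μ (milnorMap μ (milnorMap μ (milnorMap μ v))) -
        ε₁ • milnorMap μ (milnorMap μ v) + ε₂ • v +
        ((ε₁ - milnorMap μ σ ⬝ᵥ milnorMap μ σ) * (v ⬝ᵥ milnorMap μ σ)) • milnorMap μ σ) :
    ∑ i : Fin 3, μ i • ((Pi.single i 1 : Fin 3 → ℝ) ⨯₃ ν₂ (Pi.single i 1)) =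
      (ε₁ - milnorMap μ σ ⬝ᵥ milnorMap μ σ) •
        (milnorMap μ (milnorMap μ σ) ⨯₃ milnorMap μ σ) := by
  funext j
  fin_cases j <;>
    simp [hν₂, milnorMap, crossProduct, dotProduct, Fin.sum_univ_three, Pi.single_apply] <;>
    ring
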